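/- Let M be a symmetric n×n real matrix with M ≤ 0 (negative semidefinite) and let V be a symmetric matrix with 0 ≤ V ≤ I. Then for every monotone isotropic function f on symmetric matrices (i.e. f(A) ≤ f(B) whenever the ordered eigenvalues of A are pointwise at most those of B, and f is invariant under orthogonal conjugation), f(-V·M·V) ≤ f(-M). -/

import Mathlib

open Matrix

open scoped RealInnerProductSpace

namespace Stmt8Aux

open Finset Module


variable {n : ℕ}

lemma dot_symm {A : Matrix (Fin n) (Fin n) ℝ} (hA : A.IsHermitian) (x z : Fin n → ℝ) :
    x ⬝ᵥ (A *ᵥ z) = (A *ᵥ x) ⬝ᵥ z := by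
  have h : A *ᵥ x = x ᵥ* A := by
    have := Matrix.star_mulVec A x
    simp only [star_trivial] at this
    rw [hA.eq] at this
    exact this
  rw [Matrix.dotProduct_mulVec, h]

lemma psd_dot {V : Matrix (Fin n) (Fin n) ℝ} (h : (1 - V).PosSemidef) (y : Fin n → ℝ) :
    y ⬝ᵥ (V *ᵥ y) ≤ y ⬝ᵥ y := by
  have := h.dotProduct_mulVec_nonneg y
  simp only [star_trivial, Matrix.sub_mulVec, dotProduct_sub, Matrix.one_mulVec] at this
  linarith

open scoped MatrixOrder in
lemma psd_one_sub_sq {V : Matrix (Fin n) (Fin n) ℝ} (hVpsd : V.PosSemidef)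
    (hVle : (1 - V).PosSemidef) : (1 - V * V).PosSemidef := by
  have hV := hVpsd.1
  have hW : Matrix.PosSemidef (CFC.sqrt V) := (CFC.sqrt_nonneg V).posSemidef
  set W := CFC.sqrt V with hWdef
  have hWW : W * W = V := CFC.sqrt_mul_sqrt_self V hVpsd.nonneg
  refine Matrix.PosSemidef.of_dotProduct_mulVec_nonneg ?_ ?_
  · show (1 - V * V)ᴴ = 1 - V * V
    rw [Matrix.conjTranspose_sub, Matrix.conjTranspose_one, Matrix.conjTranspose_mul, hV.eq]
  · intro x
    simp only [star_trivial, Matrix.sub_mulVec, dotProduct_sub, Matrix.one_mulVec]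
    have e2 : x ⬝ᵥ ((V * V) *ᵥ x) = (W *ᵥ x) ⬝ᵥ (V *ᵥ (W *ᵥ x)) := by
      have h3 : V * V = W * (V * W) := by rw [← hWW]; simp only [Matrix.mul_assoc]
      rw [h3, ← Matrix.mulVec_mulVec, dot_symm hW.1, ← Matrix.mulVec_mulVec]
    have e3 : (W *ᵥ x) ⬝ᵥ (W *ᵥ x) = x ⬝ᵥ (V *ᵥ x) := by
      rw [← dot_symm hW.1, Matrix.mulVec_mulVec, hWW]
    have b1 := psd_dot hVle (W *ᵥ x)
    have b2 := psd_dot hVle x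
    rw [e2]
    linarith [e3 ▸ b1]

lemma inner_dot (x y : EuclideanSpace ℝ (Fin n)) :
    ⟪x, y⟫ = dotProduct (WithLp.equiv 2 (Fin n → ℝ) x) (WithLp.equiv 2 (Fin n → ℝ) y) := by
  simp [PiLp.inner_apply, dotProduct, RCLike.inner_apply, mul_comm]

lemma L_mul (A B : Matrix (Fin n) (Fin n) ℝ) (x : EuclideanSpace ℝ (Fin n)) :
    Matrix.toEuclideanLin (A * B) x
      = Matrix.toEuclideanLin A (Matrix.toEuclideanLin B x) := by
  apply (WithLp.equiv 2 (Fin n → ℝ)).injective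
  simp [Matrix.mulVec_mulVec]

lemma L_eigen {A : Matrix (Fin n) (Fin n) ℝ} (hA : A.IsHermitian) (j : Fin n) :
    Matrix.toEuclideanLin A (hA.eigenvectorBasis j)
      = hA.eigenvalues j • hA.eigenvectorBasis j := by
  apply (WithLp.equiv 2 (Fin n → ℝ)).injective
  simp [Matrix.toEuclideanLin_apply, hA.mulVec_eigenvectorBasis]

lemma quad {A : Matrix (Fin n) (Fin n) ℝ} (hA : A.IsHermitian) (x : EuclideanSpace ℝ (Fin n)) :
    ⟪x, Matrix.toEuclideanLin A x⟫
      = ∑ j, hA.eigenvalues j * ⟪hA.eigenvectorBasis j, x⟫ ^ 2 := by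
  set v := hA.eigenvectorBasis with hv
  conv_lhs => rw [← v.sum_repr' x, map_sum, inner_sum]
  refine Finset.sum_congr rfl fun j _ => ?_
  rw [LinearMap.map_smul, L_eigen hA j, ← hv]
  rw [real_inner_smul_right, real_inner_smul_right]
  rw [v.sum_repr' x, real_inner_comm x (v j)]
  ring

lemma parseval (b : OrthonormalBasis (Fin n) ℝ (EuclideanSpace ℝ (Fin n)))
    (x : EuclideanSpace ℝ (Fin n)) : ⟪x, x⟫ = ∑ j, ⟪b j, x⟫ ^ 2 := by
  rw [← b.sum_inner_mul_inner x x]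
  refine Finset.sum_congr rfl fun j _ => ?_
  rw [real_inner_comm x (b j)]; ring

lemma coeff_zero (b : OrthonormalBasis (Fin n) ℝ (EuclideanSpace ℝ (Fin n)))
    (s : Set (Fin n)) {i : Fin n} (hi : i ∉ s) {x : EuclideanSpace ℝ (Fin n)}
    (hx : x ∈ Submodule.span ℝ (b '' s)) : ⟪b i, x⟫ = 0 := by
  have hle : Submodule.span ℝ (b '' s) ≤ LinearMap.ker (innerₛₗ ℝ (b i)) := by
    rw [Submodule.span_le]
    rintro _ ⟨j, hj, rfl⟩
    have hij : i ≠ j := fun h => hi (h ▸ hj)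
    simpa [LinearMap.mem_ker] using b.orthonormal.2 hij
  simpa using hle hx

lemma finrank_le_comap (f : EuclideanSpace ℝ (Fin n) →ₗ[ℝ] EuclideanSpace ℝ (Fin n))
    (W : Submodule ℝ (EuclideanSpace ℝ (Fin n))) :
    finrank ℝ W ≤ finrank ℝ (W.comap f) := by
  have h1 := LinearMap.finrank_range_add_finrank_ker (W.mkQ.comp f)
  rw [LinearMap.ker_comp, Submodule.ker_mkQ] at h1
  have h2 : finrank ℝ (LinearMap.range (W.mkQ.comp f))
      ≤ finrank ℝ (EuclideanSpace ℝ (Fin n) ⧸ W) := Submodule.finrank_le _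
  have h3 := Submodule.finrank_quotient_add_finrank W
  omega

lemma exists_ne_zero_mem_inf {U W : Submodule ℝ (EuclideanSpace ℝ (Fin n))}
    (h : n < finrank ℝ U + finrank ℝ W) : ∃ x, x ∈ U ⊓ W ∧ x ≠ 0 := by
  have h1 := Submodule.finrank_sup_add_finrank_inf_eq U W
  have h2 : finrank ℝ ↥(U ⊔ W) ≤ n := by
    simpa [finrank_euclideanSpace_fin] using Submodule.finrank_le (U ⊔ W)
  have hpos : 0 < finrank ℝ ↥(U ⊓ W) := by omega
  apply Submodule.exists_mem_ne_zero_of_ne_bot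
  intro hbot
  rw [hbot, finrank_bot] at hpos
  exact lt_irrefl 0 hpos

lemma eig_le {S V : Matrix (Fin n) (Fin n) ℝ} (hS : S.PosSemidef) (hV : V.IsHermitian)
    (hV2 : (1 - V * V).PosSemidef) (hA : (V * S * V).IsHermitian)
    (σ τ : Equiv.Perm (Fin n)) (hσ : Monotone fun i => hA.eigenvalues (σ i))
    (hτ : Monotone fun i => hS.1.eigenvalues (τ i)) (k : Fin n) :
    hA.eigenvalues (σ k) ≤ hS.1.eigenvalues (τ k) := by
  classical
  set vA := hA.eigenvectorBasis with hvA
  set vS := hS.1.eigenvectorBasis with hvS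
  set a := hA.eigenvalues with ha
  set s := hS.1.eigenvalues with hs
  set LV := Matrix.toEuclideanLin V with hLV
  set U : Submodule ℝ (EuclideanSpace ℝ (Fin n)) :=
    Submodule.span ℝ (vA '' (σ '' Set.Ici k)) with hUdef
  set Wm : Submodule ℝ (EuclideanSpace ℝ (Fin n)) :=
    Submodule.span ℝ (vS '' (τ '' Set.Iic k)) with hWdef
  have hU : finrank ℝ U = n - k := by
    have himg : vA '' (σ '' Set.Ici k)
        = Set.range (fun j : Set.Ici k => vA (σ (j : Fin n))) := by
      rw [Set.image_image, Set.image_eq_range]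
    have hli : LinearIndependent ℝ (fun j : Set.Ici k => vA (σ (j : Fin n))) :=
      (vA.orthonormal.comp _ (σ.injective.comp Subtype.val_injective)).linearIndependent
    rw [hUdef, himg, finrank_span_eq_card hli, ← Set.toFinset_card, Set.toFinset_Ici, Fin.card_Ici]
  have hWm : finrank ℝ Wm = (k : ℕ) + 1 := by
    have himg : vS '' (τ '' Set.Iic k)
        = Set.range (fun j : Set.Iic k => vS (τ (j : Fin n))) := by
      rw [Set.image_image, Set.image_eq_range]
    have hli : LinearIndependent ℝ (fun j : Set.Iic k => vS (τ (j : Fin n))) :=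
      (vS.orthonormal.comp _ (τ.injective.comp Subtype.val_injective)).linearIndependent
    rw [hWdef, himg, finrank_span_eq_card hli, ← Set.toFinset_card, Set.toFinset_Iic, Fin.card_Iic]
  have hY : (k : ℕ) + 1 ≤ finrank ℝ (Wm.comap LV) := hWm ▸ finrank_le_comap LV Wm
  obtain ⟨x, hxUW, hx0⟩ :=
    exists_ne_zero_mem_inf (U := U) (W := Wm.comap LV) (by
      have hk := k.2
      omega)
  obtain ⟨hxU, hxY⟩ := hxUW
  set y := LV x with hy
  have hyW : y ∈ Wm := hxY
  have cA : ∀ j : Fin n, j < k → ⟪vA (σ j), x⟫ = 0 := by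
    intro j hj
    refine coeff_zero vA (σ '' Set.Ici k) ?_ hxU
    rintro ⟨m, hm, hms⟩
    have hmj := σ.injective hms
    rw [hmj] at hm
    exact absurd hm (by simpa using hj.not_ge)
  have cS : ∀ j : Fin n, k < j → ⟪vS (τ j), y⟫ = 0 := by
    intro j hj
    refine coeff_zero vS (τ '' Set.Iic k) ?_ hyW
    rintro ⟨m, hm, hms⟩
    have hmj := τ.injective hms
    rw [hmj] at hm
    exact absurd hm (by simpa using hj.not_ge)
  have hxx : (0:ℝ) < ⟪x, x⟫ :=
    lt_of_le_of_ne real_inner_self_nonneg (Ne.symm fun h => hx0 (inner_self_eq_zero.1 h))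
  have P : ⟪x, x⟫ = ∑ j, ⟪vA (σ j), x⟫ ^ 2 := by
    rw [parseval vA x]
    exact (Equiv.sum_comp σ (fun j => ⟪vA j, x⟫ ^ 2)).symm
  have Q : ⟪x, Matrix.toEuclideanLin (V * S * V) x⟫
      = ∑ j, a (σ j) * ⟪vA (σ j), x⟫ ^ 2 := by
    rw [quad hA x]
    exact (Equiv.sum_comp σ (fun j => a j * ⟪vA j, x⟫ ^ 2)).symm
  have low : a (σ k) * ⟪x, x⟫ ≤ ⟪x, Matrix.toEuclideanLin (V * S * V) x⟫ := by
    rw [P, Q, Finset.mul_sum]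
    refine Finset.sum_le_sum fun j _ => ?_
    rcases lt_or_ge j k with h | h
    · rw [cA j h]; simp
    · exact mul_le_mul_of_nonneg_right (hσ h) (sq_nonneg _)
  have hsym := (Matrix.isHermitian_iff_isSymmetric.1 hV)
  have mid : ⟪x, Matrix.toEuclideanLin (V * S * V) x⟫ = ⟪y, Matrix.toEuclideanLin S y⟫ := by
    rw [L_mul (V * S) V x, L_mul V S (LV x)]
    exact (hsym x (Matrix.toEuclideanLin S (LV x))).symm
  have Py : ⟪y, y⟫ = ∑ j, ⟪vS (τ j), y⟫ ^ 2 := by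
    rw [parseval vS y]
    exact (Equiv.sum_comp τ (fun j => ⟪vS j, y⟫ ^ 2)).symm
  have Qy : ⟪y, Matrix.toEuclideanLin S y⟫ = ∑ j, s (τ j) * ⟪vS (τ j), y⟫ ^ 2 := by
    rw [quad hS.1 y]
    exact (Equiv.sum_comp τ (fun j => s j * ⟪vS j, y⟫ ^ 2)).symm
  have upp : ⟪y, Matrix.toEuclideanLin S y⟫ ≤ s (τ k) * ⟪y, y⟫ := by
    rw [Py, Qy, Finset.mul_sum]
    refine Finset.sum_le_sum fun j _ => ?_
    rcases le_or_gt j k with h | h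
    · exact mul_le_mul_of_nonneg_right (hτ h) (sq_nonneg _)
    · rw [cS j h]; simp
  have hyx : ⟪y, y⟫ ≤ ⟪x, x⟫ := by
    have hpsd := hV2.dotProduct_mulVec_nonneg (WithLp.equiv 2 (Fin n → ℝ) x)
    simp only [star_trivial, Matrix.sub_mulVec, dotProduct_sub,
      Matrix.one_mulVec] at hpsd
    have e1 : ⟪y, y⟫ = (WithLp.equiv 2 (Fin n → ℝ) x)
        ⬝ᵥ ((V * V) *ᵥ (WithLp.equiv 2 (Fin n → ℝ) x)) := by
      rw [inner_dot]
      have hyv : WithLp.equiv 2 (Fin n → ℝ) y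
          = V *ᵥ (WithLp.equiv 2 (Fin n → ℝ) x) := by
        rw [hy, hLV]; simp
      rw [hyv, ← Matrix.mulVec_mulVec, dot_symm hV]
      exact dotProduct_comm _ _
    have e2 : ⟪x, x⟫ = (WithLp.equiv 2 (Fin n → ℝ) x) ⬝ᵥ (WithLp.equiv 2 (Fin n → ℝ) x) :=
      inner_dot x x
    rw [e1, e2]
    linarith
  have hs0 : (0:ℝ) ≤ s (τ k) := hS.eigenvalues_nonneg _
  have chain : a (σ k) * ⟪x, x⟫ ≤ s (τ k) * ⟪x, x⟫ := by
    calc a (σ k) * ⟪x, x⟫ ≤ ⟪x, Matrix.toEuclideanLin (V * S * V) x⟫ := low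
      _ = ⟪y, Matrix.toEuclideanLin S y⟫ := mid
      _ ≤ s (τ k) * ⟪y, y⟫ := upp
      _ ≤ s (τ k) * ⟪x, x⟫ := mul_le_mul_of_nonneg_left hyx hs0
  exact le_of_mul_le_mul_right chain hxx

end Stmt8Aux


open Stmt8Aux in
/-- For `M ≤ 0`, `0 ≤ V ≤ I` and any monotone isotropic function `f` on symmetric
matrices, `f(-V·M·V) ≤ f(-M)`. -/
theorem stmt_8 (n : ℕ) (M V : Matrix (Fin n) (Fin n) ℝ)
    (hM : M.IsHermitian) (hMneg : (-M).PosSemidef)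
    (hV : V.IsHermitian) (hVpsd : V.PosSemidef) (hVle : (1 - V).PosSemidef)
    (f : Matrix (Fin n) (Fin n) ℝ → ℝ)
    (hiso : ∀ (A O : Matrix (Fin n) (Fin n) ℝ),
      O ∈ Matrix.orthogonalGroup (Fin n) ℝ → f (O⁻¹ * A * O) = f A)
    (hmono : ∀ (A B : Matrix (Fin n) (Fin n) ℝ) (hA : A.IsHermitian) (hB : B.IsHermitian)
      (σ τ : Equiv.Perm (Fin n)),
      Monotone (fun i => hA.eigenvalues (σ i)) →
      Monotone (fun i => hB.eigenvalues (τ i)) →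
      (∀ i : Fin n, hA.eigenvalues (σ i) ≤ hB.eigenvalues (τ i)) → f A ≤ f B) :
    f (-(V * M * V)) ≤ f (-M) := by
  have heq : -(V * M * V) = V * (-M) * V := by
    simp [Matrix.mul_neg, Matrix.neg_mul]
  rw [heq]
  have hA : (V * (-M) * V).IsHermitian := by
    show (V * (-M) * V)ᴴ = V * (-M) * V
    rw [Matrix.conjTranspose_mul, Matrix.conjTranspose_mul, hV.eq, hMneg.1.eq,
      Matrix.mul_assoc]
  have hV2 := psd_one_sub_sq hVpsd hVle
  have hm1 : Monotone fun i => hA.eigenvalues (Tuple.sort hA.eigenvalues i) := by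
    exact Tuple.monotone_sort hA.eigenvalues
  have hm2 : Monotone fun i => hMneg.1.eigenvalues (Tuple.sort hMneg.1.eigenvalues i) := by
    exact Tuple.monotone_sort hMneg.1.eigenvalues
  exact hmono (V * (-M) * V) (-M) hA hMneg.1
    (Tuple.sort hA.eigenvalues) (Tuple.sort hMneg.1.eigenvalues) hm1 hm2
    (fun i => eig_le hMneg hV hV2 hA _ _ hm1 hm2 i)
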